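/- Assume a* > 0, c₁max > 0, and β ≥ β_max. Then g₁(x) > H'(x) for every x ∈ (0, c₁max), and consequently g₁ is strictly increasing on (0, c₁max). -/

import Mathlib

lemma slope_le (H H' : ℝ → ℝ) (hHcont : ContinuousOn H (Set.Ici 0))
    (hHderiv : ∀ x ∈ Set.Ioi (0:ℝ), HasDerivAt H (H' x) x)
    {a b M : ℝ} (ha : 0 ≤ a) (hab : a ≤ b)
    (hM : ∀ t ∈ Set.Ioo a b, H' t ≤ M) : H b - H a ≤ M * (b - a) := by
  have hmono : MonotoneOn (fun t => M * t - H t) (Set.Icc a b) := by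
    apply monotoneOn_of_deriv_nonneg (convex_Icc a b)
    · exact ((continuous_const.mul continuous_id).continuousOn).sub
        (hHcont.mono (fun t ht => le_trans ha ht.1))
    · intro t ht
      rw [interior_Icc] at ht
      have ht0 : (0:ℝ) < t := lt_of_le_of_lt ha ht.1
      exact (((hasDerivAt_id t).const_mul M).sub (hHderiv t ht0)).differentiableAt.differentiableWithinAt
    · intro t ht
      rw [interior_Icc] at ht
      have ht0 : (0:ℝ) < t := lt_of_le_of_lt ha ht.1
      have hd : HasDerivAt (fun t => M * t - H t) (M * 1 - H' t) t :=
        ((hasDerivAt_id t).const_mul M).sub (hHderiv t ht0)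
      rw [hd.deriv]
      simp only [mul_one]
      linarith [hM t ht]
  have := hmono (Set.left_mem_Icc.mpr hab) (Set.right_mem_Icc.mpr hab) hab
  simp only at this
  linarith

theorem stmt_12
    (H H' : ℝ → ℝ)
    (hHcont : ContinuousOn H (Set.Ici 0))
    (hHderiv : ∀ x ∈ Set.Ioi (0:ℝ), HasDerivAt H (H' x) x)
    (hH'pos : ∀ x ∈ Set.Ioi (0:ℝ), 0 < H' x)
    (hH'cont : ContinuousOn H' (Set.Ici 0))
    (hH'top : Filter.Tendsto H' Filter.atTop Filter.atTop)
    (β : ℝ) (hβ : 0 < β)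
    (astar : ℝ) (hastar : 0 ≤ astar)
    (hH'dec : StrictAntiOn H' (Set.Ioo 0 astar))
    (hH'inc : StrictMonoOn H' (Set.Ioi astar))
    (hH'conv : ConvexOn ℝ (Set.Ioi 0) H')
    (hastar0 : 0 < astar)
    (ζ : ℝ → ℝ)
    (hζ : ∀ x ∈ Set.Ioo 0 astar, ζ x ∈ Set.Ioi astar ∧ H' (ζ x) = H' x)
    (c1max : ℝ)
    (hc1max₁ : (∃ x ∈ Set.Ioo 0 astar, ζ x - x ≤ β) →
      c1max = sInf {x | x ∈ Set.Ioo 0 astar ∧ ζ x - x ≤ β})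
    (hc1max₂ : (¬ ∃ x ∈ Set.Ioo 0 astar, ζ x - x ≤ β) → c1max = astar)
    (g₁ : ℝ → ℝ) (hg₁ : ∀ x, g₁ x = (H (ζ x) - H x) / (ζ x - x - β))
    (z₀ βmax : ℝ) (hz₀ : z₀ ∈ Set.Ioi astar ∧ H' z₀ = H' 0)
    (hβmax : βmax = z₀ - (H z₀ - H 0) / H' 0)
    (hc1max0 : 0 < c1max) (hβge : βmax ≤ β)
    :
    (∀ x ∈ Set.Ioo 0 c1max, H' x < g₁ x) ∧ StrictMonoOn g₁ (Set.Ioo 0 c1max) := by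
  obtain ⟨hz₀mem, hz₀eq⟩ := hz₀
  have hz₀pos : (0:ℝ) < z₀ := lt_trans hastar0 hz₀mem
  have hq : 0 < H' 0 := hz₀eq ▸ hH'pos z₀ hz₀pos
  -- H' s ≤ H' 0 on (0, astar)
  have hle : ∀ s ∈ Set.Ioo (0:ℝ) astar, H' s ≤ H' 0 := by
    intro s hs
    have htend : Filter.Tendsto H' (nhdsWithin 0 (Set.Ioi 0)) (nhds (H' 0)) :=
      (hH'cont 0 Set.self_mem_Ici).mono_left (nhdsWithin_mono 0 Set.Ioi_subset_Ici_self)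
    refine ge_of_tendsto htend ?_
    filter_upwards [Ioo_mem_nhdsGT_of_mem (Set.mem_Ico.mpr ⟨le_refl 0, hs.1⟩)] with u hu
    exact (hH'dec ⟨hu.1, lt_trans hu.2 hs.2⟩ hs hu.2).le
  have hlt : ∀ s ∈ Set.Ioo (0:ℝ) astar, H' s < H' 0 := by
    intro s hs
    have h1 : s / 2 ∈ Set.Ioo (0:ℝ) astar := ⟨by linarith [hs.1], by linarith [hs.1, hs.2]⟩
    exact lt_of_lt_of_le (hH'dec h1 hs (by linarith [hs.1])) (hle _ h1)
  -- c1max ≤ astar and width > β on (0, c1max)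
  have hc1astar : c1max ≤ astar := by
    by_cases hS : ∃ x ∈ Set.Ioo 0 astar, ζ x - x ≤ β
    · obtain ⟨x₀, hx₀, hx₀'⟩ := hS
      rw [hc1max₁ ⟨x₀, hx₀, hx₀'⟩]
      have : sInf {x | x ∈ Set.Ioo 0 astar ∧ ζ x - x ≤ β} ≤ x₀ :=
        csInf_le ⟨0, fun y hy => hy.1.1.le⟩ ⟨hx₀, hx₀'⟩
      linarith [hx₀.2]
    · exact (hc1max₂ hS).le
  have hsub : ∀ x ∈ Set.Ioo 0 c1max, x ∈ Set.Ioo 0 astar :=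
    fun x hx => ⟨hx.1, lt_of_lt_of_le hx.2 hc1astar⟩
  have hwide : ∀ x ∈ Set.Ioo 0 c1max, β < ζ x - x := by
    intro x hx
    by_contra hcon
    push_neg at hcon
    have hxa := hsub x hx
    have hS : ∃ y ∈ Set.Ioo 0 astar, ζ y - y ≤ β := ⟨x, hxa, hcon⟩
    have hcx := hc1max₁ hS
    have : c1max ≤ x := hcx ▸ csInf_le ⟨0, fun y hy => hy.1.1.le⟩ ⟨hxa, hcon⟩
    linarith [hx.2]
  -- ζ x < z₀
  have hζlt : ∀ x ∈ Set.Ioo (0:ℝ) astar, ζ x < z₀ := by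
    intro x hx
    obtain ⟨hζmem, hζeq⟩ := hζ x hx
    by_contra hcon
    push_neg at hcon
    rcases eq_or_lt_of_le hcon with h | h
    · have : H' (ζ x) = H' z₀ := by rw [← h]
      rw [hζeq, hz₀eq] at this
      exact absurd this (ne_of_lt (hlt x hx))
    · have := hH'inc hz₀mem hζmem h
      rw [hζeq, hz₀eq] at this
      linarith [hlt x hx]
  -- the key inequality
  have hG0 : H' 0 * z₀ - (H z₀ - H 0) ≤ β * H' 0 := by
    have h1 : βmax * H' 0 ≤ β * H' 0 := mul_le_mul_of_nonneg_right hβge hq.le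
    have h2 : βmax * H' 0 = H' 0 * z₀ - (H z₀ - H 0) := by
      rw [hβmax]; field_simp
    linarith
  have keyG : ∀ x ∈ Set.Ioo 0 c1max, H' x * (ζ x - x - β) < H (ζ x) - H x := by
    intro x hx
    have hxa := hsub x hx
    obtain ⟨hζmem, hζeq⟩ := hζ x hxa
    have hζz := hζlt x hxa
    have hζ0 : (0:ℝ) ≤ ζ x := le_of_lt (lt_trans hastar0 hζmem)
    have T1 : H x - H 0 ≤ H' 0 * (x - 0) := by
      apply slope_le H H' hHcont hHderiv (le_refl 0) hxa.1.le
      intro t ht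
      exact hle t ⟨ht.1, lt_trans ht.2 hxa.2⟩
    have T2 : H z₀ - H (ζ x) ≤ H' 0 * (z₀ - ζ x) := by
      apply slope_le H H' hHcont hHderiv hζ0 hζz.le
      intro t ht
      have : H' t < H' z₀ := hH'inc (lt_trans hζmem ht.1) hz₀mem ht.2
      linarith [hz₀eq ▸ this]
    have hpq : H' x < H' 0 := hlt x hxa
    have hD : β < ζ x - x := hwide x hx
    nlinarith [mul_pos (sub_pos.mpr hpq) (sub_pos.mpr hD)]
  -- first conclusion
  have first : ∀ x ∈ Set.Ioo 0 c1max, H' x < g₁ x := by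
    intro x hx
    have hD : 0 < ζ x - x - β := by linarith [hwide x hx]
    rw [hg₁ x, lt_div_iff₀ hD]
    exact keyG x hx
  refine ⟨first, ?_⟩
  intro x hx y hy hxy
  have hxa := hsub x hx
  have hya := hsub y hy
  obtain ⟨hζxmem, hζxeq⟩ := hζ x hxa
  obtain ⟨hζymem, hζyeq⟩ := hζ y hya
  have hH'yx : H' y < H' x := hH'dec hxa hya hxy
  have hζyx : ζ y < ζ x := by
    by_contra hcon
    push_neg at hcon
    rcases eq_or_lt_of_le hcon with h | h
    · rw [h] at hζxeq; rw [hζxeq] at hζyeq; linarith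
    · have := hH'inc hζxmem hζymem h
      rw [hζxeq, hζyeq] at this; linarith
  have hDx : 0 < ζ x - x - β := by linarith [hwide x hx]
  have hDy : 0 < ζ y - y - β := by linarith [hwide y hy]
  -- S1 : H ζx - H ζy ≤ H' x * (ζx - ζy)
  have S1 : H (ζ x) - H (ζ y) ≤ H' x * (ζ x - ζ y) := by
    apply slope_le H H' hHcont hHderiv (le_of_lt (lt_trans hastar0 hζymem)) hζyx.le
    intro t ht
    have : H' t < H' (ζ x) := hH'inc (lt_trans hζymem ht.1) hζxmem ht.2
    linarith [hζxeq ▸ this]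
  -- S2 : H y - H x < H' x * (y - x), via midpoint
  have S2 : H y - H x < H' x * (y - x) := by
    set m := (x + y) / 2 with hm
    have hma : m ∈ Set.Ioo (0:ℝ) astar := ⟨by nlinarith [hxa.1, hya.1], by nlinarith [hxa.2, hya.2]⟩
    have hxm : x < m := by dsimp [m]; linarith
    have hmy : m < y := by dsimp [m]; linarith
    have A1 : H m - H x ≤ H' x * (m - x) := by
      apply slope_le H H' hHcont hHderiv hxa.1.le hxm.le
      intro t ht
      exact (hH'dec hxa ⟨lt_trans hxa.1 ht.1, lt_trans ht.2 hma.2⟩ ht.1).le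
    have A2 : H y - H m ≤ H' m * (y - m) := by
      apply slope_le H H' hHcont hHderiv (le_of_lt hma.1) hmy.le
      intro t ht
      exact (hH'dec hma ⟨lt_trans hma.1 ht.1, lt_trans ht.2 hya.2⟩ ht.1).le
    have A3 : H' m < H' x := hH'dec hxa hma hxm
    nlinarith [A1, A2, A3, hmy]
  -- combine
  have hGx : H' x * (ζ x - x - β) < H (ζ x) - H x := keyG x hx
  rw [hg₁ x, hg₁ y, div_lt_div_iff₀ hDx hDy]
  nlinarith [mul_lt_mul_of_pos_right hGx (show (0:ℝ) < (ζ x - ζ y) + (y - x) by linarith),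
    mul_lt_mul_of_pos_right (show -(H' x) * ((ζ x - ζ y) + (y - x)) < (H (ζ y) - H y) - (H (ζ x) - H x) by nlinarith [S1, S2]) hDx]
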